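/- Let V be a real inner product space, p a positive even integer, and a, b, c ∈ V. Then |a+c|^p - |b+c|^p - |a|^p + |b|^p ≤ ∑_{j=1}^{p/2} ∑_{k=0}^{j} C(p/2,j)·C(j,k)·2^{j-k}·|c|^{j+k} · [ 2^{p-2j-1}·(|a-b|^{p-2j} + |b|^{p-2j})·∑_{ℓ=1}^{j-k} C(j-k,ℓ)·|b|^{j-k-ℓ}·|a-b|^ℓ + ∑_{ℓ=1}^{p-2j} C(p-2j,ℓ)·|b|^{p-j-k-ℓ}·|a-b|^ℓ ]. -/
import Mathlib

open Finset RealInnerProductSpace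

private lemma key_real (s q : ℕ) (u v x y t nc : ℝ)
    (hx : 0 ≤ x) (hy : 0 ≤ y) (ht : 0 ≤ t) (hnc : 0 ≤ nc)
    (hd : |u - v| ≤ t * nc) (hv : |v| ≤ y * nc)
    (hxy : x ≤ y + t) (hyx : y ≤ x + t) :
    u ^ s * x ^ q - v ^ s * y ^ q ≤
      nc ^ s * ((2 : ℝ) ^ ((q : ℤ) - 1) * (t ^ q + y ^ q)
            * (∑ l ∈ Icc 1 s, (s.choose l : ℝ) * y ^ (s - l) * t ^ l)
        + y ^ s * ∑ l ∈ Icc 1 q, (q.choose l : ℝ) * y ^ (q - l) * t ^ l) := by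
  set S1 : ℝ := ∑ l ∈ Icc 1 s, (s.choose l : ℝ) * y ^ (s - l) * t ^ l with hS1
  set S2 : ℝ := ∑ l ∈ Icc 1 q, (q.choose l : ℝ) * y ^ (q - l) * t ^ l with hS2
  have hS1nn : 0 ≤ S1 := Finset.sum_nonneg fun l _ => by positivity
  have hS2nn : 0 ≤ S2 := Finset.sum_nonneg fun l _ => by positivity
  have htnc : 0 ≤ t * nc := mul_nonneg ht hnc
  have hvabs : 0 ≤ |v| := abs_nonneg v
  -- (A) : |u^s - v^s| ≤ nc^s * S1
  have hA : |u ^ s - v ^ s| ≤ nc ^ s * S1 := by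
    have hus : u ^ s = ∑ k ∈ range (s + 1), (u - v) ^ k * v ^ (s - k) * s.choose k := by
      rw [← add_pow]; ring_nf
    have heq : u ^ s - v ^ s = ∑ k ∈ Icc 1 s, (u - v) ^ k * v ^ (s - k) * s.choose k := by
      rw [hus]
      rw [show Finset.range (s+1) = insert 0 (Finset.Icc 1 s) by ext i; simp; omega]
      rw [Finset.sum_insert (by simp)]
      simp
    rw [heq]
    calc |∑ k ∈ Icc 1 s, (u - v) ^ k * v ^ (s - k) * s.choose k|
        ≤ ∑ k ∈ Icc 1 s, |(u - v) ^ k * v ^ (s - k) * s.choose k| :=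
          Finset.abs_sum_le_sum_abs _ _
      _ ≤ ∑ k ∈ Icc 1 s, (s.choose k : ℝ) * ((y * nc) ^ (s - k)) * ((t * nc) ^ k) := by
          apply Finset.sum_le_sum
          intro k hk
          rw [abs_mul, abs_mul, abs_pow, abs_pow, Nat.abs_cast]
          have h1 : |u - v| ^ k ≤ (t * nc) ^ k := pow_le_pow_left₀ (abs_nonneg _) hd k
          have h2 : |v| ^ (s - k) ≤ (y * nc) ^ (s - k) :=
            pow_le_pow_left₀ (abs_nonneg _) hv _
          calc |u - v| ^ k * |v| ^ (s - k) * (s.choose k : ℝ)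
              ≤ (t * nc) ^ k * ((y * nc) ^ (s - k)) * (s.choose k : ℝ) := by
                apply mul_le_mul_of_nonneg_right _ (by positivity)
                exact mul_le_mul h1 h2 (by positivity) (by positivity)
            _ = (s.choose k : ℝ) * ((y * nc) ^ (s - k)) * ((t * nc) ^ k) := by ring
      _ = nc ^ s * S1 := by
          rw [hS1, Finset.mul_sum]
          apply Finset.sum_congr rfl
          intro k hk
          simp only [Finset.mem_Icc] at hk
          rw [mul_pow, mul_pow]
          rw [show nc ^ s = nc ^ (s - k) * nc ^ k by
            rw [← pow_add]; congr 1; omega]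
          ring
  -- (B) : x^q ≤ 2^(q-1) * (t^q + y^q)
  have hB : x ^ q ≤ (2 : ℝ) ^ ((q : ℤ) - 1) * (t ^ q + y ^ q) := by
    rcases Nat.eq_zero_or_pos q with hq | hq
    · subst hq; norm_num
    · have h1 : x ^ q ≤ (t + y) ^ q := pow_le_pow_left₀ hx (by linarith) q
      have h2 : (t + y) ^ q ≤ 2 ^ (q - 1) * (t ^ q + y ^ q) := add_pow_le ht hy q
      have h3 : ((2 : ℝ) ^ ((q : ℤ) - 1)) = 2 ^ (q - 1) := by
        rw [show ((q : ℤ) - 1) = ((q - 1 : ℕ) : ℤ) by omega, zpow_natCast]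
      rw [h3]; linarith
  -- (C) : |x^q - y^q| ≤ S2
  have hC : |x ^ q - y ^ q| ≤ S2 := by
    have expand : ∀ z w : ℝ, (z + w) ^ q = z ^ q +
        ∑ l ∈ Icc 1 q, (q.choose l : ℝ) * z ^ (q - l) * w ^ l := by
      intro z w
      rw [show z + w = w + z by ring, add_pow]
      rw [show Finset.range (q+1) = insert 0 (Finset.Icc 1 q) by ext i; simp; omega]
      rw [Finset.sum_insert (by simp)]
      simp only [pow_zero, mul_one, Nat.choose_zero_right, Nat.cast_one, one_mul,
        Nat.sub_zero]
      congr 1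
      apply Finset.sum_congr rfl; intro l hl; ring
    rw [abs_sub_le_iff]
    constructor
    · have h1 : x ^ q ≤ (y + t) ^ q := pow_le_pow_left₀ hx hxy q
      rw [expand y t] at h1
      linarith
    · rcases le_or_gt y x with h | h
      · have : y ^ q ≤ x ^ q := pow_le_pow_left₀ hy h q
        linarith
      · have h1 : y ^ q ≤ (x + t) ^ q := pow_le_pow_left₀ hy hyx q
        rw [expand x t] at h1
        have h2 : (∑ l ∈ Icc 1 q, (q.choose l : ℝ) * x ^ (q - l) * t ^ l) ≤ S2 := by
          apply Finset.sum_le_sum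
          intro l _
          have : x ^ (q - l) ≤ y ^ (q - l) := pow_le_pow_left₀ hx h.le _
          have := mul_le_mul_of_nonneg_left this (by positivity : (0:ℝ) ≤ (q.choose l : ℝ))
          exact mul_le_mul_of_nonneg_right this (by positivity)
        linarith
  -- combine
  have split : u ^ s * x ^ q - v ^ s * y ^ q
      = (u ^ s - v ^ s) * x ^ q + v ^ s * (x ^ q - y ^ q) := by ring
  rw [split]
  have hxq : 0 ≤ x ^ q := by positivity
  have t1 : (u ^ s - v ^ s) * x ^ q ≤ nc ^ s * ((2 : ℝ) ^ ((q : ℤ) - 1) * (t ^ q + y ^ q) * S1) := by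
    calc (u ^ s - v ^ s) * x ^ q ≤ |u ^ s - v ^ s| * x ^ q :=
          mul_le_mul_of_nonneg_right (le_abs_self _) hxq
      _ ≤ (nc ^ s * S1) * x ^ q := mul_le_mul_of_nonneg_right hA hxq
      _ ≤ (nc ^ s * S1) * ((2 : ℝ) ^ ((q : ℤ) - 1) * (t ^ q + y ^ q)) :=
          mul_le_mul_of_nonneg_left hB (by positivity)
      _ = nc ^ s * ((2 : ℝ) ^ ((q : ℤ) - 1) * (t ^ q + y ^ q) * S1) := by ring
  have t2 : v ^ s * (x ^ q - y ^ q) ≤ nc ^ s * (y ^ s * S2) := by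
    calc v ^ s * (x ^ q - y ^ q) ≤ |v ^ s * (x ^ q - y ^ q)| := le_abs_self _
      _ = |v| ^ s * |x ^ q - y ^ q| := by rw [abs_mul, abs_pow]
      _ ≤ (y * nc) ^ s * S2 := by
          apply mul_le_mul (pow_le_pow_left₀ (abs_nonneg _) hv s) hC (abs_nonneg _)
          positivity
      _ = nc ^ s * (y ^ s * S2) := by rw [mul_pow]; ring
  linarith

theorem stmt_15 {V : Type*} [NormedAddCommGroup V] [InnerProductSpace ℝ V]
    (p : ℕ) (hp : 0 < p) (hpe : Even p) (a b c : V) :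
    ‖a + c‖ ^ p - ‖b + c‖ ^ p - ‖a‖ ^ p + ‖b‖ ^ p
      ≤ ∑ j ∈ Finset.Icc 1 (p / 2), ∑ k ∈ Finset.range (j + 1),
          (Nat.choose (p / 2) j : ℝ) * (Nat.choose j k : ℝ) * 2 ^ (j - k)
            * ‖c‖ ^ (j + k)
            * ((2 : ℝ) ^ ((p : ℤ) - 2 * j - 1)
                  * (‖a - b‖ ^ (p - 2 * j) + ‖b‖ ^ (p - 2 * j))
                  * ∑ l ∈ Finset.Icc 1 (j - k),
                      (Nat.choose (j - k) l : ℝ) * ‖b‖ ^ (j - k - l)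
                        * ‖a - b‖ ^ l
                + ∑ l ∈ Finset.Icc 1 (p - 2 * j),
                    (Nat.choose (p - 2 * j) l : ℝ) * ‖b‖ ^ (p - j - k - l)
                      * ‖a - b‖ ^ l) := by
  set m := p / 2 with hm
  have hp2 : p = 2 * m := by
    obtain ⟨r, hr⟩ := hpe; omega
  -- expansion lemma
  have expand : ∀ x : V, ‖x + c‖ ^ p = ‖x‖ ^ p +
      ∑ j ∈ Finset.Icc 1 m, ∑ k ∈ Finset.range (j + 1),
        (Nat.choose m j : ℝ) * (Nat.choose j k : ℝ) * 2 ^ (j - k)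
          * ⟪x, c⟫ ^ (j - k) * ‖c‖ ^ (2 * k) * ‖x‖ ^ (p - 2 * j) := by
    intro x
    have h1 : ‖x + c‖ ^ p = ((2 * ⟪x, c⟫ + ‖c‖ ^ 2) + ‖x‖ ^ 2) ^ m := by
      rw [hp2, pow_mul, norm_add_sq_real]; ring_nf
    rw [h1, add_pow]
    rw [show Finset.range (m+1) = insert 0 (Finset.Icc 1 m) by ext i; simp; omega]
    rw [Finset.sum_insert (by simp)]
    simp only [pow_zero, one_mul, Nat.choose_zero_right, Nat.cast_one, mul_one, Nat.sub_zero]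
    rw [← pow_mul]
    congr 1
    · rw [hp2, mul_comm]
    apply Finset.sum_congr rfl
    intro j hj
    simp only [Finset.mem_Icc] at hj
    have hjm : j ≤ m := hj.2
    rw [show (2 * ⟪x, c⟫ + ‖c‖ ^ 2) = (‖c‖ ^ 2 + 2 * ⟪x, c⟫) by ring, add_pow,
      Finset.sum_mul, Finset.sum_mul]
    apply Finset.sum_congr rfl
    intro k hk
    simp only [Finset.mem_range] at hk
    rw [mul_pow, show ((‖x‖:ℝ) ^ 2) ^ (m - j) = ‖x‖ ^ (p - 2 * j) by
        rw [← pow_mul]; congr 1; omega,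
      show ((‖c‖:ℝ) ^ 2) ^ k = ‖c‖ ^ (2 * k) by rw [← pow_mul]]
    ring
  rw [show ‖a + c‖ ^ p - ‖b + c‖ ^ p - ‖a‖ ^ p + ‖b‖ ^ p
      = (‖a + c‖ ^ p - ‖a‖ ^ p) - (‖b + c‖ ^ p - ‖b‖ ^ p) by ring,
    expand a, expand b]
  simp only [add_sub_cancel_left]
  rw [← Finset.sum_sub_distrib]
  apply Finset.sum_le_sum
  intro j hj
  simp only [Finset.mem_Icc] at hj
  rw [← Finset.sum_sub_distrib]
  apply Finset.sum_le_sum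
  intro k hk
  simp only [Finset.mem_range] at hk
  have hkj : k ≤ j := by omega
  set s := j - k with hs
  set q := p - 2 * j with hq
  set t := ‖a - b‖ with hT
  set y := ‖b‖ with hY
  set x := ‖a‖ with hX
  set nc := ‖c‖ with hNC
  have hqs : p - j - k = q + s := by omega
  -- rewrite second inner sum : ‖b‖^(p-j-k-l) = y^s * y^(q-l)
  have hsum2 : (∑ l ∈ Finset.Icc 1 (p - 2 * j),
      (Nat.choose (p - 2 * j) l : ℝ) * y ^ (p - j - k - l) * t ^ l)
      = y ^ s * ∑ l ∈ Finset.Icc 1 q, (Nat.choose q l : ℝ) * y ^ (q - l) * t ^ l := by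
    rw [Finset.mul_sum]
    apply Finset.sum_congr rfl
    intro l hl
    simp only [Finset.mem_Icc] at hl
    rw [show p - j - k - l = s + (q - l) by omega, pow_add]
    ring
  rw [hsum2]
  have hzpow : (2 : ℝ) ^ ((p : ℤ) - 2 * j - 1) = (2 : ℝ) ^ ((q : ℤ) - 1) := by
    congr 1; omega
  rw [hzpow]
  -- match with key lemma
  have key := key_real s q ⟪a, c⟫ ⟪b, c⟫ x y t nc (norm_nonneg a) (norm_nonneg b)
    (norm_nonneg _) (norm_nonneg c)
    (by rw [← inner_sub_left]; exact abs_real_inner_le_norm _ _)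
    (abs_real_inner_le_norm _ _)
    (by
      calc x = ‖b + (a - b)‖ := by rw [hX]; congr 1; abel
        _ ≤ y + t := norm_add_le _ _)
    (by
      calc y = ‖a + (b - a)‖ := by rw [hY]; congr 1; abel
        _ ≤ x + ‖b - a‖ := norm_add_le _ _
        _ = x + t := by rw [hT, norm_sub_rev])
  have hK : (0:ℝ) ≤ (Nat.choose m j : ℝ) * (Nat.choose j k : ℝ) * 2 ^ (j - k) * nc ^ (2 * k) := by
    positivity
  have := mul_le_mul_of_nonneg_left key hK
  calc (Nat.choose m j : ℝ) * (Nat.choose j k : ℝ) * 2 ^ (j - k)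
          * ⟪a, c⟫ ^ (j - k) * nc ^ (2 * k) * x ^ (p - 2 * j)
        - (Nat.choose m j : ℝ) * (Nat.choose j k : ℝ) * 2 ^ (j - k)
          * ⟪b, c⟫ ^ (j - k) * nc ^ (2 * k) * y ^ (p - 2 * j)
      = (Nat.choose m j : ℝ) * (Nat.choose j k : ℝ) * 2 ^ (j - k) * nc ^ (2 * k)
          * (⟪a, c⟫ ^ s * x ^ q - ⟪b, c⟫ ^ s * y ^ q) := by rw [hs, hq]; ring
    _ ≤ (Nat.choose m j : ℝ) * (Nat.choose j k : ℝ) * 2 ^ (j - k) * nc ^ (2 * k)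
          * (nc ^ s * ((2 : ℝ) ^ ((q : ℤ) - 1) * (t ^ q + y ^ q)
              * (∑ l ∈ Finset.Icc 1 s, (Nat.choose s l : ℝ) * y ^ (s - l) * t ^ l)
            + y ^ s * ∑ l ∈ Finset.Icc 1 q, (Nat.choose q l : ℝ) * y ^ (q - l) * t ^ l)) := this
    _ = (Nat.choose m j : ℝ) * (Nat.choose j k : ℝ) * 2 ^ (j - k) * nc ^ (j + k)
          * ((2 : ℝ) ^ ((q : ℤ) - 1) * (t ^ q + y ^ q)
              * (∑ l ∈ Finset.Icc 1 s, (Nat.choose s l : ℝ) * y ^ (s - l) * t ^ l)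
            + y ^ s * ∑ l ∈ Finset.Icc 1 q, (Nat.choose q l : ℝ) * y ^ (q - l) * t ^ l) := by
        rw [show j + k = 2 * k + s by omega, pow_add]; ring
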